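/- arXiv:2509.17549 — 3 statements merged into one kernel-verified Lean document; each statement's English description precedes it below -/
import Mathlib

section
/- The SCAD function r_θ(t), defined piecewise as |t| for |t| ≤ 1, (−t² + 2θ|t| − 1)/(2(θ−1)) for 1 < |t| ≤ θ, and (θ+1)/2 for |t| > θ, with parameter θ > 2, is (θ−1)^{-1}-weakly convex, i.e., t ↦ r_θ(t) + t²/(2(θ−1)) is convex on ℝ. -/
/-- The SCAD function with parameter `θ`. -/
noncomputable def scad (θ t : ℝ) : ℝ :=
  if |t| ≤ 1 then |t|
  else if |t| ≤ θ then (-t ^ 2 + 2 * θ * |t| - 1) / (2 * (θ - 1))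
  else (θ + 1) / 2

/-- SCAD is `(θ-1)⁻¹`-weakly convex. -/
theorem scad_weaklyConvex (θ : ℝ) (hθ : 2 < θ) :
    ConvexOn ℝ Set.univ (fun t : ℝ => scad θ t + t ^ 2 / (2 * (θ - 1))) := by
  have hθ1 : (0:ℝ) < θ - 1 := by linarith
  have hθ2 : (0:ℝ) < 2 * (θ - 1) := by linarith
  set g : ℝ → ℝ := fun u =>
    (2 * (θ - 1))⁻¹ * (2 * θ * u - 1 + max (1 - u) 0 ^ 2 + max (u - θ) 0 ^ 2) with hgdef
  -- convexity of g
  have ha1 : ConvexOn ℝ Set.univ (fun u : ℝ => 1 - u) :=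
    ⟨convex_univ, fun x _ y _ a b _ _ hab => by
      simp only [smul_eq_mul]; nlinarith⟩
  have ha2 : ConvexOn ℝ Set.univ (fun u : ℝ => u - θ) :=
    ⟨convex_univ, fun x _ y _ a b _ _ hab => by
      simp only [smul_eq_mul]; nlinarith⟩
  have hq1 : ConvexOn ℝ Set.univ (fun u : ℝ => max (1 - u) 0 ^ 2) := by
    have h1 : ConvexOn ℝ Set.univ (fun u : ℝ => max (1 - u) 0) := by
      have := ha1.sup (convexOn_const (0:ℝ) convex_univ)
      simpa [Pi.sup_def] using this
    have := h1.pow (fun x _ => le_max_right _ _) 2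
    exact this
  have hq2 : ConvexOn ℝ Set.univ (fun u : ℝ => max (u - θ) 0 ^ 2) := by
    have h1 : ConvexOn ℝ Set.univ (fun u : ℝ => max (u - θ) 0) := by
      have := ha2.sup (convexOn_const (0:ℝ) convex_univ)
      simpa [Pi.sup_def] using this
    have := h1.pow (fun x _ => le_max_right _ _) 2
    exact this
  have haff : ConvexOn ℝ Set.univ (fun u : ℝ => 2 * θ * u - 1) :=
    ⟨convex_univ, fun x _ y _ a b _ _ hab => by
      simp only [smul_eq_mul]; nlinarith⟩
  have hg : ConvexOn ℝ Set.univ g := by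
    have := ((haff.add hq1).add hq2).smul (c := (2 * (θ - 1))⁻¹) (by positivity)
    simpa [hgdef, smul_eq_mul, add_assoc] using this
  -- monotonicity of g on [0, ∞)
  have hmono : MonotoneOn g (Set.Ici 0) := by
    intro a ha b hb hab
    simp only [hgdef]
    have ha0 : (0:ℝ) ≤ a := ha
    have hb0 : (0:ℝ) ≤ b := hb
    apply mul_le_mul_of_nonneg_left _ (by positivity)
    rcases le_total (1 - a) 0 with h1a | h1a <;> rcases le_total (1 - b) 0 with h1b | h1b <;>
      rcases le_total (a - θ) 0 with h2a | h2a <;> rcases le_total (b - θ) 0 with h2b | h2b <;>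
      simp [max_eq_left, max_eq_right, h1a, h1b, h2a, h2b] <;> nlinarith
  -- the function equals g ∘ |·|
  have heq : ∀ t : ℝ, scad θ t + t ^ 2 / (2 * (θ - 1)) = g |t| := by
    intro t
    have habs : t ^ 2 = |t| ^ 2 := (sq_abs t).symm
    unfold scad
    simp only [hgdef, habs]
    rcases le_or_gt (|t|) 1 with h1 | h1
    · rw [if_pos h1]
      have e1 : max (1 - |t|) 0 = 1 - |t| := max_eq_left (by linarith)
      have e2 : max (|t| - θ) 0 = 0 := max_eq_right (by linarith)
      rw [e1, e2]
      generalize |t| = u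
      field_simp
      ring
    · rw [if_neg (not_le.mpr h1)]
      rcases le_or_gt (|t|) θ with h2 | h2
      · rw [if_pos h2]
        have e1 : max (1 - |t|) 0 = 0 := max_eq_right (by linarith)
        have e2 : max (|t| - θ) 0 = 0 := max_eq_right (by linarith)
        rw [e1, e2]
        generalize |t| = u
        field_simp
        ring
      · rw [if_neg (not_le.mpr h2)]
        have e1 : max (1 - |t|) 0 = 0 := max_eq_right (by linarith)
        have e2 : max (|t| - θ) 0 = |t| - θ := max_eq_left (by linarith)
        rw [e1, e2]
        generalize |t| = u
        field_simp
        ring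
  have habs : ConvexOn ℝ Set.univ (fun t : ℝ => |t|) := by
    exact (convexOn_univ_norm (E := ℝ))
  have himg : (fun t : ℝ => |t|) '' Set.univ = Set.Ici (0:ℝ) := by
    ext x
    simp only [Set.image_univ, Set.mem_range, Set.mem_Ici]
    constructor
    · rintro ⟨y, rfl⟩; exact abs_nonneg y
    · intro hx; exact ⟨x, abs_of_nonneg hx⟩
  have hcomp : ConvexOn ℝ Set.univ (g ∘ fun t : ℝ => |t|) := by
    apply ConvexOn.comp
    · rw [himg]; exact hg.subset (Set.subset_univ _) (convex_Ici 0)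
    · exact habs
    · rw [himg]; exact hmono
  have : (fun t : ℝ => scad θ t + t ^ 2 / (2 * (θ - 1))) = g ∘ fun t : ℝ => |t| := by
    funext t; exact heq t
  rw [this]
  exact hcomp
end

section
/- Let 𝔏_{r,σ} = {X ∈ ℝ^{n₁×n₂} : 0 < Rank(X) ≤ r, and for each j ≤ r, σ_j(X) ≥ σ or σ_j(X) = 0}, where σ_j(X) denotes the j-th largest singular value and σ > 0. Then 𝔏_{r,σ} is a closed subset of ℝ^{n₁×n₂}. -/
open Matrix BigOperators

section ConjDiag

variable {n : Type*} [Fintype n] [DecidableEq n] {A : Matrix n n ℝ} (hA : A.IsHermitian)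

/-- Conjugation of a diagonal matrix by the eigenvector unitary of `hA`. -/
noncomputable def conjDiag (f : n → ℝ) : Matrix n n ℝ :=
  (hA.eigenvectorUnitary : Matrix n n ℝ) * Matrix.diagonal f *
    star (hA.eigenvectorUnitary : Matrix n n ℝ)

lemma star_mul_self_eigenvectorUnitary :
    star (hA.eigenvectorUnitary : Matrix n n ℝ) * (hA.eigenvectorUnitary : Matrix n n ℝ) = 1 :=
  Matrix.UnitaryGroup.star_mul_self _

lemma mul_star_self_eigenvectorUnitary :
    (hA.eigenvectorUnitary : Matrix n n ℝ) * star (hA.eigenvectorUnitary : Matrix n n ℝ) = 1 :=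
  (Matrix.mem_unitaryGroup_iff).mp (hA.eigenvectorUnitary).2

lemma conjDiag_eigen : conjDiag hA hA.eigenvalues = A := by
  have h := hA.spectral_theorem
  rw [conjDiag]
  conv_rhs => rw [h]
  rw [Unitary.conjStarAlgAut_apply]
  congr 3

lemma conjDiag_mul (f g : n → ℝ) :
    conjDiag hA f * conjDiag hA g = conjDiag hA (fun i => f i * g i) := by
  simp only [conjDiag, mul_assoc]
  rw [← mul_assoc (star (hA.eigenvectorUnitary : Matrix n n ℝ)),
    star_mul_self_eigenvectorUnitary hA, one_mul,
    ← mul_assoc (Matrix.diagonal f), diagonal_mul_diagonal]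

lemma conjDiag_smul (c : ℝ) (f : n → ℝ) :
    c • conjDiag hA f = conjDiag hA (fun i => c * f i) := by
  have hf : (fun i => c * f i) = c • f := rfl
  rw [conjDiag, conjDiag, hf, Matrix.diagonal_smul, Matrix.mul_smul, Matrix.smul_mul]

lemma conjDiag_sub (f g : n → ℝ) :
    conjDiag hA f - conjDiag hA g = conjDiag hA (fun i => f i - g i) := by
  simp only [conjDiag, ← Matrix.sub_mul, ← Matrix.mul_sub, Matrix.diagonal_sub]

lemma conjDiag_add (f g : n → ℝ) :
    conjDiag hA f + conjDiag hA g = conjDiag hA (fun i => f i + g i) := by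
  simp only [conjDiag, ← Matrix.add_mul, ← Matrix.mul_add, Matrix.diagonal_add]

lemma conjDiag_one : conjDiag hA (fun _ => 1) = 1 := by
  simp only [conjDiag]
  rw [show (Matrix.diagonal (fun _ : n => (1:ℝ))) = 1 from Matrix.diagonal_one, mul_one,
    mul_star_self_eigenvectorUnitary hA]

lemma conjDiag_trace (f : n → ℝ) : (conjDiag hA f).trace = ∑ i, f i := by
  simp only [conjDiag]
  rw [Matrix.trace_mul_cycle, star_mul_self_eigenvectorUnitary hA, one_mul,
    Matrix.trace_diagonal]

lemma conjDiag_det (f : n → ℝ) : (conjDiag hA f).det = ∏ i, f i := by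
  have h : ((hA.eigenvectorUnitary : Matrix n n ℝ)).det *
      (star (hA.eigenvectorUnitary : Matrix n n ℝ)).det = 1 := by
    rw [← Matrix.det_mul, mul_star_self_eigenvectorUnitary hA, Matrix.det_one]
  simp only [conjDiag, Matrix.det_mul, Matrix.det_diagonal]
  linear_combination (∏ i, f i) * h

lemma conjDiag_posSemidef_iff (f : n → ℝ) :
    (conjDiag hA f).PosSemidef ↔ ∀ i, 0 ≤ f i := by
  constructor
  · intro h
    have h2 := h.mul_mul_conjTranspose_same (star (hA.eigenvectorUnitary : Matrix n n ℝ))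
    rw [← Matrix.star_eq_conjTranspose, star_star] at h2
    simp only [conjDiag] at h2
    rw [show star (hA.eigenvectorUnitary : Matrix n n ℝ) *
        ((hA.eigenvectorUnitary : Matrix n n ℝ) * Matrix.diagonal f *
          star (hA.eigenvectorUnitary : Matrix n n ℝ)) *
        (hA.eigenvectorUnitary : Matrix n n ℝ) =
        (star (hA.eigenvectorUnitary : Matrix n n ℝ) * (hA.eigenvectorUnitary : Matrix n n ℝ)) *
          Matrix.diagonal f *
        (star (hA.eigenvectorUnitary : Matrix n n ℝ) * (hA.eigenvectorUnitary : Matrix n n ℝ))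
        by noncomm_ring] at h2
    rw [star_mul_self_eigenvectorUnitary hA, one_mul, mul_one] at h2
    exact Matrix.posSemidef_diagonal_iff.mp h2
  · intro h
    have h2 := (Matrix.posSemidef_diagonal_iff.mpr h).mul_mul_conjTranspose_same
      (hA.eigenvectorUnitary : Matrix n n ℝ)
    rwa [← Matrix.star_eq_conjTranspose] at h2

lemma conjDiag_inv (f : n → ℝ) (hf : ∀ i, f i ≠ 0) :
    (conjDiag hA f)⁻¹ = conjDiag hA (fun i => (f i)⁻¹) := by
  apply Matrix.inv_eq_right_inv
  rw [conjDiag_mul]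
  have h : (fun i => f i * (f i)⁻¹) = fun _ : n => (1:ℝ) := by
    ext i; exact mul_inv_cancel₀ (hf i)
  rw [h, conjDiag_one]

end ConjDiag

lemma isClosed_posSemidef {n : Type*} [Fintype n] :
    IsClosed {M : Matrix n n ℝ | M.PosSemidef} := by
  have h : {M : Matrix n n ℝ | M.PosSemidef} =
      {M | Mᴴ = M} ∩ ⋂ x : n → ℝ, {M | 0 ≤ dotProduct (star x) (M *ᵥ x)} := by
    ext M
    simp only [Set.mem_setOf_eq, Set.mem_inter_iff, Set.mem_iInter, Matrix.posSemidef_iff_dotProduct_mulVec]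
    exact ⟨fun h => ⟨h.1, h.2⟩, fun h => ⟨h.1, h.2⟩⟩
  rw [h]
  refine IsClosed.inter ?_ (isClosed_iInter fun x => ?_)
  · exact isClosed_eq (continuous_id.matrix_conjTranspose) continuous_id
  · exact isClosed_le continuous_const
      ((continuous_const.dotProduct (continuous_id.matrix_mulVec continuous_const)))

/-- The set `𝔏_{r,σ}` of matrices of rank in `(0, r]` whose nonzero singular values
are all at least `σ` (the singular values of `X` are the square roots of the
eigenvalues of `Xᴴ * X`). -/
def lowRankSet (n₁ n₂ r : ℕ) (σ : ℝ) : Set (Matrix (Fin n₁) (Fin n₂) ℝ) :=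
  {X | 0 < X.rank ∧ X.rank ≤ r ∧
    ∀ i, (Matrix.isHermitian_conjTranspose_mul_self X).eigenvalues i = 0 ∨
      σ ^ 2 ≤ (Matrix.isHermitian_conjTranspose_mul_self X).eigenvalues i}

/-- Membership characterization by closed conditions. -/
lemma lowRankSet_eq (n₁ n₂ r : ℕ) (σ : ℝ) (hσ : 0 < σ) :
    lowRankSet n₁ n₂ r σ =
      {X : Matrix (Fin n₁) (Fin n₂) ℝ |
        ((Xᴴ * X) * (Xᴴ * X) - σ ^ 2 • (Xᴴ * X)).PosSemidef ∧
        σ ^ 2 ≤ (Xᴴ * X).trace ∧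
        ((Xᴴ * X) * ((Xᴴ * X + (σ ^ 2 / (r + 1)) • 1)⁻¹)).trace ≤ (r : ℝ)} := by
  ext X
  simp only [lowRankSet, Set.mem_setOf_eq]
  have hA : (Xᴴ * X).IsHermitian := Matrix.isHermitian_conjTranspose_mul_self X
  set ε : ℝ := σ ^ 2 / (r + 1) with hε_def
  have hε : 0 < ε := by positivity
  set lam : Fin n₂ → ℝ := (Matrix.isHermitian_conjTranspose_mul_self X).eigenvalues with hlam
  have hnn : ∀ i, 0 ≤ lam i := fun i =>
    (Matrix.posSemidef_conjTranspose_mul_self X).eigenvalues_nonneg i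
  have hAe : conjDiag hA lam = Xᴴ * X := conjDiag_eigen hA
  have hrank : X.rank = Fintype.card {i // lam i ≠ 0} := by
    rw [← Matrix.rank_conjTranspose_mul_self X, hA.rank_eq_card_non_zero_eigs]
  have h1 : (Xᴴ * X) * (Xᴴ * X) - σ ^ 2 • (Xᴴ * X) =
      conjDiag hA (fun i => lam i * lam i - σ ^ 2 * lam i) := by
    rw [← conjDiag_sub hA (fun i => lam i * lam i) (fun i => σ ^ 2 * lam i),
      ← conjDiag_mul hA lam lam, ← conjDiag_smul hA (σ ^ 2) lam, hAe]
  have h2 : (Xᴴ * X).trace = ∑ i, lam i := by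
    rw [← conjDiag_trace hA lam, hAe]
  have e1 : ε • (1 : Matrix (Fin n₂) (Fin n₂) ℝ) = conjDiag hA (fun _ => ε) := by
    rw [← conjDiag_one hA, conjDiag_smul]
    congr 1
    funext i
    ring
  have hsum : Xᴴ * X + ε • 1 = conjDiag hA (fun i => lam i + ε) := by
    rw [← conjDiag_add hA lam (fun _ => ε), hAe, e1]
  have h3 : ((Xᴴ * X) * ((Xᴴ * X + ε • 1)⁻¹)).trace = ∑ i, lam i / (lam i + ε) := by
    rw [hsum, conjDiag_inv hA _ (fun i => (add_pos_of_nonneg_of_pos (hnn i) hε).ne')]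
    rw [show Xᴴ * X * conjDiag hA (fun i => (lam i + ε)⁻¹)
        = conjDiag hA (fun i => lam i * (lam i + ε)⁻¹) from by
      rw [← conjDiag_mul hA lam (fun i => (lam i + ε)⁻¹), hAe]]
    rw [conjDiag_trace]
    simp [div_eq_mul_inv]
  rw [h1, h2, h3, conjDiag_posSemidef_iff]
  constructor
  · rintro ⟨hr0, hrr, hev⟩
    refine ⟨fun i => ?_, ?_, ?_⟩
    · rcases hev i with h | h <;> nlinarith [hnn i]
    · rw [hrank] at hr0
      obtain ⟨⟨i, hi⟩⟩ := Fintype.card_pos_iff.mp hr0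
      have hσi : σ ^ 2 ≤ lam i := by
        rcases hev i with h | h
        · exact absurd h hi
        · exact h
      calc σ ^ 2 ≤ lam i := hσi
        _ ≤ ∑ j, lam j := Finset.single_le_sum (fun j _ => hnn j) (Finset.mem_univ i)
    · have hle : ∀ i, lam i / (lam i + ε) ≤ if lam i ≠ 0 then 1 else 0 := by
        intro i
        by_cases h : lam i = 0
        · simp [h]
        · simp only [h, ne_eq, not_false_eq_true, if_true]
          rw [div_le_one (add_pos_of_nonneg_of_pos (hnn i) hε)]
          linarith
      calc ∑ i, lam i / (lam i + ε) ≤ ∑ i, (if lam i ≠ 0 then (1:ℝ) else 0) :=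
            Finset.sum_le_sum fun i _ => hle i
        _ = ((Finset.univ.filter (fun i => lam i ≠ 0)).card : ℝ) := by
            rw [Finset.sum_boole]
        _ = ((Fintype.card {i // lam i ≠ 0} : ℕ) : ℝ) := by
            rw [Fintype.card_subtype]
        _ = (X.rank : ℝ) := by rw [hrank]
        _ ≤ (r : ℝ) := by exact_mod_cast hrr
  · rintro ⟨hev, htr, hsum2⟩
    have hev' : ∀ i, lam i = 0 ∨ σ ^ 2 ≤ lam i := by
      intro i
      rcases eq_or_lt_of_le (hnn i) with h | h
      · exact Or.inl h.symm
      · right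
        have := hev i
        nlinarith
    refine ⟨?_, ?_, hev'⟩
    · rw [hrank, Fintype.card_pos_iff]
      by_contra hempty
      rw [not_nonempty_iff] at hempty
      have hz : ∀ i, lam i = 0 := fun i => by
        by_contra h; exact hempty.false ⟨i, h⟩
      rw [Finset.sum_congr rfl (fun i _ => hz i), Finset.sum_const, smul_zero] at htr
      nlinarith
    · by_contra hgt
      push_neg at hgt
      have hcard : r + 1 ≤ Fintype.card {i // lam i ≠ 0} := by
        rw [hrank] at hgt; omega
      have hbound : ∀ i, lam i ≠ 0 → (σ ^ 2) / (σ ^ 2 + ε) ≤ lam i / (lam i + ε) := by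
        intro i hi
        have hσi : σ ^ 2 ≤ lam i := by
          rcases hev' i with h | h
          · exact absurd h hi
          · exact h
        rw [div_le_div_iff₀ (by positivity) (add_pos_of_nonneg_of_pos (hnn i) hε)]
        nlinarith
      have hcard' : ((r : ℝ) + 1) ≤ ((Finset.univ.filter (fun i => lam i ≠ 0)).card : ℝ) := by
        rw [← Fintype.card_subtype]
        exact_mod_cast hcard
      have hstep2 := Finset.card_nsmul_le_sum (Finset.univ.filter (fun i => lam i ≠ 0))
        (fun i => lam i / (lam i + ε)) (σ ^ 2 / (σ ^ 2 + ε))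
        (fun i hi => hbound i (Finset.mem_filter.mp hi).2)
      rw [nsmul_eq_mul] at hstep2
      have hstep : ∑ i ∈ Finset.univ.filter (fun i => lam i ≠ 0), lam i / (lam i + ε)
          ≤ ∑ i, lam i / (lam i + ε) := by
        apply Finset.sum_le_sum_of_subset_of_nonneg (Finset.filter_subset _ _)
        intro i _ _
        exact div_nonneg (hnn i) (add_pos_of_nonneg_of_pos (hnn i) hε).le
      have hkey : ((r : ℝ) + 1) * (σ ^ 2 / (σ ^ 2 + ε)) ≤ ∑ i, lam i / (lam i + ε) :=
        le_trans (mul_le_mul_of_nonneg_right hcard' (by positivity))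
          (le_trans hstep2 hstep)
      have hσ2 : 0 < σ ^ 2 := pow_pos hσ 2
      have hr1 : (0:ℝ) < (r : ℝ) + 1 := by positivity
      have hgtr : (r : ℝ) < ((r : ℝ) + 1) * (σ ^ 2 / (σ ^ 2 + ε)) := by
        rw [hε_def]
        have hden : σ ^ 2 + σ ^ 2 / ((r : ℝ) + 1) = σ ^ 2 * ((r : ℝ) + 2) / ((r : ℝ) + 1) := by
          field_simp
          ring
        rw [hden]
        have hrw : ((r : ℝ) + 1) * (σ ^ 2 / (σ ^ 2 * ((r : ℝ) + 2) / ((r : ℝ) + 1)))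
            = ((r : ℝ) + 1) ^ 2 / ((r : ℝ) + 2) := by
          field_simp
        rw [hrw, lt_div_iff₀ (by positivity)]
        nlinarith
      linarith

/-- `𝔏_{r,σ}` is a closed subset of the space of matrices. -/
theorem lowRankSet_isClosed (n₁ n₂ r : ℕ) (σ : ℝ) (hσ : 0 < σ) :
    IsClosed (lowRankSet n₁ n₂ r σ) := by
  rw [lowRankSet_eq n₁ n₂ r σ hσ]
  set ε : ℝ := σ ^ 2 / (r + 1) with hε_def
  have hε : 0 < ε := by positivity
  have hdet : ∀ X : Matrix (Fin n₁) (Fin n₂) ℝ, (Xᴴ * X + ε • 1).det ≠ 0 := by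
    intro X
    have hA : (Xᴴ * X).IsHermitian := Matrix.isHermitian_conjTranspose_mul_self X
    have hnn : ∀ i, 0 ≤ hA.eigenvalues i := fun i =>
      (Matrix.posSemidef_conjTranspose_mul_self X).eigenvalues_nonneg i
    have hAe : conjDiag hA hA.eigenvalues = Xᴴ * X := conjDiag_eigen hA
    have e1 : ε • (1 : Matrix (Fin n₂) (Fin n₂) ℝ) = conjDiag hA (fun _ => ε) := by
      rw [← conjDiag_one hA, conjDiag_smul]
      congr 1
      funext i
      ring
    have hsum : Xᴴ * X + ε • 1 = conjDiag hA (fun i => hA.eigenvalues i + ε) := by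
      rw [← conjDiag_add hA hA.eigenvalues (fun _ => ε), hAe, e1]
    rw [hsum, conjDiag_det]
    have hp : ∀ i, 0 < hA.eigenvalues i + ε := fun i => by have := hnn i; positivity
    exact (Finset.prod_pos (fun i _ => hp i)).ne'
  have hcA : Continuous fun X : Matrix (Fin n₁) (Fin n₂) ℝ => Xᴴ * X :=
    (continuous_id.matrix_conjTranspose).matrix_mul continuous_id
  have hcM : Continuous fun X : Matrix (Fin n₁) (Fin n₂) ℝ => Xᴴ * X + ε • 1 :=
    hcA.add continuous_const
  have hcInv : Continuous fun X : Matrix (Fin n₁) (Fin n₂) ℝ => (Xᴴ * X + ε • 1)⁻¹ := by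
    have h : (fun X : Matrix (Fin n₁) (Fin n₂) ℝ => (Xᴴ * X + ε • 1)⁻¹) =
        fun X => ((Xᴴ * X + ε • 1).det)⁻¹ • (Xᴴ * X + ε • 1).adjugate := by
      ext X i j
      rw [Matrix.inv_def, Ring.inverse_eq_inv']
    rw [h]
    exact ((hcM.matrix_det).inv₀ hdet).smul (hcM.matrix_adjugate)
  have hS : {X : Matrix (Fin n₁) (Fin n₂) ℝ |
        ((Xᴴ * X) * (Xᴴ * X) - σ ^ 2 • (Xᴴ * X)).PosSemidef ∧
        σ ^ 2 ≤ (Xᴴ * X).trace ∧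
        ((Xᴴ * X) * ((Xᴴ * X + ε • 1)⁻¹)).trace ≤ (r : ℝ)} =
      {X : Matrix (Fin n₁) (Fin n₂) ℝ |
        ((Xᴴ * X) * (Xᴴ * X) - σ ^ 2 • (Xᴴ * X)).PosSemidef} ∩
      ({X | σ ^ 2 ≤ (Xᴴ * X).trace} ∩
       {X | ((Xᴴ * X) * ((Xᴴ * X + ε • 1)⁻¹)).trace ≤ (r : ℝ)}) := by
    ext X
    exact ⟨fun h => ⟨h.1, h.2.1, h.2.2⟩, fun h => ⟨h.1, h.2.1, h.2.2⟩⟩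
  rw [hS]
  refine IsClosed.inter ?_ (IsClosed.inter ?_ ?_)
  · exact isClosed_posSemidef.preimage
      ((hcA.matrix_mul hcA).sub ((continuous_const (y := σ ^ 2)).smul hcA))
  · exact isClosed_le continuous_const (hcA.matrix_trace)
  · exact isClosed_le ((hcA.matrix_mul hcInv).matrix_trace) continuous_const
end

section
/- Let J : ℝ^n → ℝ be continuously differentiable with L-Lipschitz gradient, C ⊆ ℝ^n nonempty closed, c ∈ (0, 1/2), and γ ∈ (0, (1−2c)/L]. Then for every x̄ ∈ C and every x ∈ P_C(x̄ − γ∇J(x̄)), the sufficient decrease inequality J(x) ≤ J(x̄) − cγ‖(x̄ − x)/γ‖² holds. -/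
open InnerProductSpace

/-- Descent lemma for L-Lipschitz gradient. -/
lemma descent_lemma {n : ℕ} (J : EuclideanSpace ℝ (Fin n) → ℝ)
    (J' : EuclideanSpace ℝ (Fin n) → EuclideanSpace ℝ (Fin n))
    (hgrad : ∀ x, HasGradientAt J (J' x) x)
    (L : ℝ) (hL : 0 < L) (hLip : ∀ a b, ‖J' a - J' b‖ ≤ L * ‖a - b‖)
    (xb x : EuclideanSpace ℝ (Fin n)) :
    J x ≤ J xb + inner ℝ (J' xb) (x - xb) + L / 2 * ‖x - xb‖ ^ 2 := by
  set v := x - xb with hv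
  have hpath : ∀ t : ℝ, HasDerivAt (fun t : ℝ => xb + t • v) v t := by
    intro t
    simpa using ((hasDerivAt_id t).smul_const v).const_add xb
  have hφ : ∀ t : ℝ, HasDerivAt (fun t : ℝ => J (xb + t • v))
      (inner ℝ (J' (xb + t • v)) v : ℝ) t := by
    intro t
    have h1 := (hgrad (xb + t • v)).hasFDerivAt.comp_hasDerivAt t (hpath t)
    simp [toDual_apply_apply] at h1
    exact h1
  set ψ : ℝ → ℝ := fun t => J (xb + t • v) - t * inner ℝ (J' xb) v - L * t ^ 2 / 2 * ‖v‖ ^ 2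
    with hψ
  have hψd : ∀ t : ℝ, HasDerivAt ψ
      ((inner ℝ (J' (xb + t • v)) v : ℝ) - inner ℝ (J' xb) v - L * t * ‖v‖ ^ 2) t := by
    intro t
    have h2 : HasDerivAt (fun t : ℝ => t * (inner ℝ (J' xb) v : ℝ)) (inner ℝ (J' xb) v) t := by
      simpa using (hasDerivAt_id t).mul_const (inner ℝ (J' xb) v : ℝ)
    have h3 : HasDerivAt (fun t : ℝ => L * t ^ 2 / 2 * ‖v‖ ^ 2) (L * t * ‖v‖ ^ 2) t := by
      have := ((hasDerivAt_pow 2 t).const_mul L).div_const 2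
      have := this.mul_const (‖v‖ ^ 2)
      refine HasDerivAt.congr_deriv this ?_
      norm_num
      left; ring
    exact ((hφ t).sub h2).sub h3
  have hmono : AntitoneOn ψ (Set.Icc 0 1) := by
    apply antitoneOn_of_deriv_nonpos (convex_Icc 0 1)
    · exact fun t _ => (hψd t).differentiableAt.continuousAt.continuousWithinAt
    · intro t ht
      exact (hψd t).differentiableAt.differentiableWithinAt
    · intro t ht
      rw [(hψd t).deriv]
      have ht0 : 0 ≤ t := by
        rw [interior_Icc] at ht; exact le_of_lt ht.1
      have hb : (inner ℝ (J' (xb + t • v)) v : ℝ) - inner ℝ (J' xb) v ≤ L * t * ‖v‖ ^ 2 := by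
        have := real_inner_le_norm (J' (xb + t • v) - J' xb) v
        have hlip := hLip (xb + t • v) xb
        have hnv : ‖xb + t • v - xb‖ = t * ‖v‖ := by
          simp [norm_smul, abs_of_nonneg ht0]
        rw [hnv] at hlip
        have h4 : (inner ℝ (J' (xb + t • v)) v : ℝ) - inner ℝ (J' xb) v
            = inner ℝ (J' (xb + t • v) - J' xb) v := by
          rw [inner_sub_left]
        rw [h4]
        calc (inner ℝ (J' (xb + t • v) - J' xb) v : ℝ)
            ≤ ‖J' (xb + t • v) - J' xb‖ * ‖v‖ := real_inner_le_norm _ _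
          _ ≤ L * (t * ‖v‖) * ‖v‖ := by
              apply mul_le_mul_of_nonneg_right hlip (norm_nonneg v)
          _ = L * t * ‖v‖ ^ 2 := by ring
      linarith
  have := hmono (Set.left_mem_Icc.2 zero_le_one) (Set.right_mem_Icc.2 zero_le_one) zero_le_one
  simp only [hψ] at this
  have e0 : xb + (0:ℝ) • v = xb := by simp
  have e1 : xb + (1:ℝ) • v = x := by simp [hv]
  rw [e0, e1] at this
  nlinarith [this]

/-- Sufficient decrease property of the projected gradient step over a closed set. -/
theorem sufficient_decrease {n : ℕ} (J : EuclideanSpace ℝ (Fin n) → ℝ)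
    (J' : EuclideanSpace ℝ (Fin n) → EuclideanSpace ℝ (Fin n))
    (hJ : ContDiff ℝ 1 J)
    (hgrad : ∀ x, HasGradientAt J (J' x) x)
    (L : ℝ) (hL : 0 < L) (hLip : ∀ a b, ‖J' a - J' b‖ ≤ L * ‖a - b‖)
    (C : Set (EuclideanSpace ℝ (Fin n))) (hne : C.Nonempty) (hclosed : IsClosed C)
    (c : ℝ) (hc0 : 0 < c) (hc1 : c < 1 / 2)
    (γ : ℝ) (hγ0 : 0 < γ) (hγ : γ ≤ (1 - 2 * c) / L) :
    ∀ xb ∈ C, ∀ x, x ∈ C →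
      (∀ y ∈ C, ‖(xb - γ • J' xb) - x‖ ≤ ‖(xb - γ • J' xb) - y‖) →
      J x ≤ J xb - c * γ * ‖γ⁻¹ • (xb - x)‖ ^ 2 := by
  intro xb hxb x hx hproj
  have hdesc := descent_lemma J J' hgrad L hL hLip xb x
  -- projection inequality with y = xb
  have hp := hproj xb hxb
  have hpb : ‖(xb - γ • J' xb) - xb‖ = γ * ‖J' xb‖ := by
    simp [norm_smul, abs_of_pos hγ0]
  rw [hpb] at hp
  -- expand ‖(xb - x) - γ • J' xb‖²
  have hrw : (xb - γ • J' xb) - x = (xb - x) - γ • J' xb := by abel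
  rw [hrw] at hp
  have hsq : ‖(xb - x) - γ • J' xb‖ ^ 2 ≤ (γ * ‖J' xb‖) ^ 2 := by
    have := pow_le_pow_left₀ (norm_nonneg _) hp 2
    simpa using this
  have hexp : ‖(xb - x) - γ • J' xb‖ ^ 2
      = ‖xb - x‖ ^ 2 - 2 * (γ * inner ℝ (xb - x) (J' xb)) + γ ^ 2 * ‖J' xb‖ ^ 2 := by
    rw [norm_sub_sq_real, real_inner_smul_right, norm_smul]
    rw [Real.norm_eq_abs, abs_of_pos hγ0]
    ring
  have key : ‖xb - x‖ ^ 2 ≤ 2 * γ * inner ℝ (xb - x) (J' xb) := by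
    nlinarith [hsq, hexp]
  -- inner ℝ (J' xb) (x - xb) = - inner ℝ (xb - x) (J' xb)
  have hflip : (inner ℝ (J' xb) (x - xb) : ℝ) = - inner ℝ (xb - x) (J' xb) := by
    rw [real_inner_comm]
    rw [show x - xb = -(xb - x) by abel, inner_neg_left]
  have hnx : ‖x - xb‖ = ‖xb - x‖ := by rw [← neg_sub, norm_neg]
  have hns : ‖γ⁻¹ • (xb - x)‖ ^ 2 = γ⁻¹ ^ 2 * ‖xb - x‖ ^ 2 := by
    rw [norm_smul, Real.norm_eq_abs, abs_of_pos (inv_pos.2 hγ0)]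
    ring
  rw [hns]
  rw [hflip, hnx] at hdesc
  have hγL : γ * L ≤ 1 - 2 * c := by
    rw [le_div_iff₀ hL] at hγ; linarith
  have hγne : γ ≠ 0 := ne_of_gt hγ0
  have h1 : (inner ℝ (xb - x) (J' xb) : ℝ) ≥ ‖xb - x‖ ^ 2 / (2 * γ) := by
    rw [ge_iff_le, div_le_iff₀ (by positivity)]
    linarith [key]
  have hnn : (0:ℝ) ≤ ‖xb - x‖ ^ 2 := by positivity
  have hfield : c * γ * (γ⁻¹ ^ 2 * ‖xb - x‖ ^ 2) = c / γ * ‖xb - x‖ ^ 2 := by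
    field_simp
  rw [hfield]
  have h2 : J x ≤ J xb - ‖xb - x‖ ^ 2 / (2 * γ) + L / 2 * ‖xb - x‖ ^ 2 := by linarith
  have h3 : c / γ * ‖xb - x‖ ^ 2 ≤ ‖xb - x‖ ^ 2 / (2 * γ) - L / 2 * ‖xb - x‖ ^ 2 := by
    rw [div_mul_eq_mul_div, div_sub' (by positivity), div_le_div_iff₀ hγ0 (by positivity)]
    ring_nf
    nlinarith [mul_le_mul_of_nonneg_left hγL hnn]
  linarith
end
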